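/- Assume the McKay Conjecture holds for the prime p: for every finite group H and Sylow p-subgroup Q of H, μ_p(H) = μ_p(N_H(Q)). Let G be a finite group acting transitively on a finite nonempty set X, P a Sylow p-subgroup of G, N = N_G(P), and let y ∈ X be such that the N-orbit of y has cardinality coprime to p. Then μ_p(Stab_G(y)) = μ_p(Stab_N(y)). -/

import Mathlib

open CategoryTheory

/-- `mu p H` is the number of isomorphism classes of irreducible finite-dimensional
complex representations of `H` whose dimension is coprime to `p`. -/
noncomputable def mu (p : ℕ) (H : Type) [Group H] : ℕ :=
  Nat.card {c : _root_.Quotient (isIsomorphicSetoid (FDRep ℂ H)) //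
    ∃ V : FDRep ℂ H, Quotient.mk (isIsomorphicSetoid (FDRep ℂ H)) V = c ∧
      Simple V ∧ p.Coprime (Module.finrank ℂ V)}

/-- The map on isomorphism classes induced by a functor. -/
noncomputable def clsMap {C D : Type*} [Category C] [Category D] (F : C ⥤ D) :
    _root_.Quotient (isIsomorphicSetoid C) → _root_.Quotient (isIsomorphicSetoid D) :=
  fun c => Quotient.liftOn c (fun V => Quotient.mk (isIsomorphicSetoid D) (F.obj V))
    (fun _ _ h => Quotient.sound (h.elim fun i => ⟨F.mapIso i⟩))

section MuCongr

variable {H K : Type} [Group H] [Group K] (e : H ≃* K)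

/-- Restriction of representations along a group isomorphism. -/
noncomputable def Phi : FDRep ℂ H ⥤ FDRep ℂ K :=
  Action.res _ e.symm.toMonoidHom

/-- Restricting along `e` and then `e.symm` is isomorphic to the identity. -/
noncomputable def PhiComp : Phi e ⋙ Phi e.symm ≅ 𝟭 (FDRep ℂ H) :=
  NatIso.ofComponents (fun M => Action.mkIso (Iso.refl _) (fun g => by
    simp only [Phi]; erw [Category.comp_id, Category.id_comp]; exact congrArg (Action.ρ M) (e.symm_apply_apply g)))

lemma Phi_map_zero_iff {M N : FDRep ℂ H} (f : M ⟶ N) : (Phi e).map f = 0 ↔ f = 0 := by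
  constructor
  · intro h
    exact Action.Hom.ext (by have h' := congrArg Action.Hom.hom h; exact h')
  · intro h; subst h
    exact Action.Hom.ext (by simp [Phi]; rfl)

/-- Restriction along a group isomorphism is an equivalence of categories. -/
noncomputable def PhiEquivalence : FDRep ℂ H ≌ FDRep ℂ K :=
  .mk (Phi e) (Phi e.symm) (PhiComp e).symm (PhiComp e.symm)

lemma simple_obj_of_equivalence {C D : Type*} [Category C] [Category D]
    [Limits.HasZeroMorphisms C] [Limits.HasZeroMorphisms D]
    (E : C ≌ D)
    (hz : ∀ {X Y : C} (f : X ⟶ Y), E.functor.map f = 0 ↔ f = 0)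
    (X : C) [Simple X] : Simple (E.functor.obj X) := by
  constructor
  intro Y f m
  set g : E.inverse.obj Y ⟶ X := E.functor.preimage (E.counitIso.hom.app Y ≫ f) with hgdef
  have hfg : E.functor.map g = E.counitIso.hom.app Y ≫ f := E.functor.map_preimage _
  have hf : f = E.counitIso.inv.app Y ≫ E.functor.map g := by
    rw [hfg, Iso.inv_hom_id_app_assoc]
  have hmono : Mono (E.functor.map g) := by rw [hfg]; exact mono_comp _ _
  have : Mono g := E.functor.mono_of_mono_map hmono
  have hzero : f = 0 ↔ g = 0 := by
    rw [← hz g]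
    constructor
    · intro h; rw [h, Limits.comp_zero] at hfg; exact hfg
    · intro h; rw [hf, h, Limits.comp_zero]
  constructor
  · intro hiso h0
    have : IsIso (E.functor.map g) := by rw [hfg]; infer_instance
    have : IsIso g := isIso_of_fully_faithful E.functor g
    exact ((Simple.mono_isIso_iff_nonzero g).mp this) (hzero.mp h0)
  · intro h0
    have hg0 : g ≠ 0 := fun h => h0 (hzero.mpr h)
    have : IsIso g := isIso_of_mono_of_nonzero hg0
    have : IsIso (E.functor.map g) := inferInstance
    rw [hf]; infer_instance

lemma Phi_simple (V : FDRep ℂ H) (hV : Simple V) : Simple ((Phi e).obj V) := by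
  have := hV
  exact simple_obj_of_equivalence (PhiEquivalence e) (fun f => Phi_map_zero_iff e f) V

/-- `mu` is invariant under group isomorphism. -/
lemma mu_congr (p : ℕ) (e : H ≃* K) : mu p H = mu p K := by
  refine Nat.card_congr ⟨fun c => ⟨clsMap (Phi e) c.1, ?_⟩,
    fun c => ⟨clsMap (Phi e.symm) c.1, ?_⟩, ?_, ?_⟩
  · obtain ⟨c, V, hV, hs, hc⟩ := c
    subst hV
    exact ⟨(Phi e).obj V, rfl, Phi_simple e V hs, hc⟩
  · obtain ⟨c, V, hV, hs, hc⟩ := c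
    subst hV
    exact ⟨(Phi e.symm).obj V, rfl, Phi_simple e.symm V hs, hc⟩
  · rintro ⟨c, hc⟩
    apply Subtype.ext
    simp only
    induction c using Quotient.inductionOn with
    | h V => exact Quotient.sound ⟨(PhiComp e).app V⟩
  · rintro ⟨c, hc⟩
    apply Subtype.ext
    simp only
    induction c using Quotient.inductionOn with
    | h V => exact Quotient.sound ⟨(PhiComp e.symm).app V⟩

end MuCongr

/-- For `Q ≤ H`, the normalizer of `Q.subgroupOf H` in `H` is `N_G(Q) ∩ H`. -/
lemma normalizer_subgroupOf_eq {G : Type} [Group G] {Q H : Subgroup G} (hQH : Q ≤ H) :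
    Subgroup.normalizer ((Q.subgroupOf H : Subgroup H) : Set H) =
      (Subgroup.normalizer (Q : Set G)).subgroupOf H := by
  ext x
  simp only [Subgroup.mem_subgroupOf, Subgroup.mem_normalizer_iff]
  constructor
  · intro h g
    constructor
    · intro hg
      exact (h ⟨g, hQH hg⟩).mp (by simpa [Subgroup.mem_subgroupOf] using hg)
    · intro hg
      have hgH : g ∈ H := by
        have h1 : (↑x * g * (↑x)⁻¹ : G) ∈ H := hQH hg
        have := mul_mem (mul_mem (inv_mem x.2) h1) x.2
        simpa [mul_assoc] using this
      have := (h ⟨g, hgH⟩).mpr (by simpa [Subgroup.mem_subgroupOf] using hg)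
      simpa [Subgroup.mem_subgroupOf] using this
  · intro h g
    constructor
    · intro hg
      have := (h (g : G)).mp (by simpa [Subgroup.mem_subgroupOf] using hg)
      simpa [Subgroup.mem_subgroupOf] using this
    · intro hg
      have : (↑x * ↑g * (↑x)⁻¹ : G) ∈ Q := by simpa [Subgroup.mem_subgroupOf] using hg
      have := (h (g : G)).mpr this
      simpa [Subgroup.mem_subgroupOf] using this

/-- The stabilizer of `y` in a subgroup `N` corresponds to `Stab_G(y) ∩ N`. -/
lemma stabilizer_subgroup_eq {G : Type} [Group G] {X : Type} [MulAction G X]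
    (N : Subgroup G) (y : X) :
    MulAction.stabilizer (↥N) y = (MulAction.stabilizer G y).subgroupOf N := by
  ext n
  simp only [MulAction.mem_stabilizer_iff, Subgroup.mem_subgroupOf]
  exact Iff.rfl

/-- Assuming the McKay Conjecture for `p`, if `G` acts transitively on `X` and the
`N = N_G(P)`-orbit of `y` has cardinality coprime to `p`, then
`μ_p(Stab_G(y)) = μ_p(Stab_N(y))`. -/
theorem mu_stabilizer_eq_of_mckay {p : ℕ} [Fact p.Prime]
    (MC : ∀ (H : Type) [Group H] [Fintype H] (Q : Sylow p H),
      mu p H = mu p (Subgroup.normalizer ((Q : Subgroup H) : Set H)))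
    {G : Type} [Group G] [Fintype G]
    {X : Type} [Fintype X] [Nonempty X] [MulAction G X] [MulAction.IsPretransitive G X]
    (P : Sylow p G) (y : X)
    (hy : p.Coprime (Nat.card (MulAction.orbit (Subgroup.normalizer ((P : Subgroup G) : Set G)) y))) :
    mu p (MulAction.stabilizer G y)
      = mu p (MulAction.stabilizer (Subgroup.normalizer ((P : Subgroup G) : Set G)) y) := by
  classical
  have hp : p.Prime := Fact.out
  set N : Subgroup G := Subgroup.normalizer ((P : Subgroup G) : Set G) with hN
  set S : Subgroup ↥N := MulAction.stabilizer ↥N y with hS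
  set H : Subgroup G := MulAction.stabilizer G y with hH
  -- index of S in N is coprime to p
  have hSindex : p.Coprime S.index := by
    rw [Subgroup.index_eq_card, ← Nat.card_congr (MulAction.orbitEquivQuotientStabilizer (↥N) y)]
    exact hy
  -- a Sylow p-subgroup of S
  obtain ⟨R⟩ : Nonempty (Sylow p ↥S) := inferInstance
  set Qs : Subgroup G := ((R : Subgroup ↥S).map S.subtype).map N.subtype with hQs
  -- cardinality of Qs
  have hcard : Nat.card ↥Qs = p ^ (Nat.card G).factorization p := by
    have h1 : Nat.card ↥Qs = Nat.card ↥(R : Subgroup ↥S) := by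
      rw [hQs]
      rw [Nat.card_congr (Subgroup.equivMapOfInjective _ N.subtype N.subtype_injective).symm.toEquiv]
      rw [Nat.card_congr (Subgroup.equivMapOfInjective _ S.subtype S.subtype_injective).symm.toEquiv]
    have h2 : Nat.card ↥(R : Subgroup ↥S) = p ^ (Nat.card ↥S).factorization p :=
      R.card_eq_multiplicity
    have hfac : ∀ (A : Type) [Group A] [Finite A] (B : Subgroup A), p.Coprime B.index →
        (Nat.card ↥B).factorization p = (Nat.card A).factorization p := by
      intro A _ _ B hB
      have hmul : Nat.card ↥B * B.index = Nat.card A := B.card_mul_index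
      rw [← hmul, Nat.factorization_mul Nat.card_pos.ne' (Subgroup.index_ne_zero_of_finite),
        Finsupp.add_apply, Nat.factorization_eq_zero_of_not_dvd
          ((Nat.Prime.coprime_iff_not_dvd hp).mp hB), add_zero]
    have h3 : (Nat.card ↥S).factorization p = (Nat.card ↥N).factorization p :=
      hfac (↥N) S hSindex
    have h4 : (Nat.card ↥N).factorization p = (Nat.card G).factorization p := by
      refine hfac G N ?_
      refine (Nat.Prime.coprime_iff_not_dvd hp).mpr (fun hdvd => ?_)
      exact P.not_dvd_index (hdvd.trans (Subgroup.index_dvd_of_le Subgroup.le_normalizer))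
    rw [h1, h2, h3, h4]
  set Q : Sylow p G := Sylow.ofCard Qs hcard with hQ
  have hQcoe : (Q : Subgroup G) = Qs := rfl
  have hQN : (Q : Subgroup G) ≤ N := by
    rw [hQcoe]
    exact Subgroup.map_subtype_le _
  have hQH : (Q : Subgroup G) ≤ H := by
    rw [hQcoe, hQs]
    rintro x hx
    obtain ⟨n, hn, rfl⟩ := hx
    obtain ⟨s, _, rfl⟩ := hn
    have hs : ((s : ↥N) : G) • y = y := s.2
    exact MulAction.mem_stabilizer_iff.mpr hs
  -- Q = P, since P is the unique Sylow p-subgroup of its normalizer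
  have hnormal : ((P.subtype Subgroup.le_normalizer : Sylow p ↥N) : Subgroup ↥N).Normal := by
    rw [Sylow.coe_subtype]
    exact Subgroup.normal_in_normalizer
  haveI := Sylow.unique_of_normal (P.subtype Subgroup.le_normalizer) hnormal
  have hQP : Q = P :=
    Sylow.subtype_injective
      (Subsingleton.elim (Q.subtype hQN) (P.subtype Subgroup.le_normalizer))
  have hQnorm : Subgroup.normalizer (Qs : Set G) = N := by
    rw [← hQcoe, hQP]
  -- apply the McKay Conjecture in H = Stab_G(y)
  haveI : Fintype ↥H := Fintype.ofFinite _
  have key := MC (↥H) (Q.subtype hQH)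
  have hcoe2 : ((Q.subtype hQH : Sylow p ↥H) : Subgroup ↥H) = Qs.subgroupOf H := by
    rw [Sylow.coe_subtype, hQcoe]
  rw [hcoe2] at key
  rw [normalizer_subgroupOf_eq (hQcoe ▸ hQH), hQnorm] at key
  rw [key]
  -- finally, N_G(P) ∩ Stab_G(y) ≃* Stab_N(y)
  refine mu_congr p ?_
  have e1 : ↥(N.subgroupOf H) ≃* ↥(N ⊓ H) := by
    rw [← Subgroup.inf_subgroupOf_right]
    exact Subgroup.subgroupOfEquivOfLe inf_le_right
  have e2 : ↥S ≃* ↥(H ⊓ N) := by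
    rw [hS, stabilizer_subgroup_eq, ← Subgroup.inf_subgroupOf_right]
    exact Subgroup.subgroupOfEquivOfLe inf_le_right
  exact e1.trans ((MulEquiv.subgroupCongr (inf_comm N H)).trans e2.symm)
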